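/- (Theorem 1, S1 part, exact form) Under the multi-user model with mean 0, E[S_1] = σ²(1 − ρ·∑_i n_i(n_i−1)/((∑_i n_i)(∑_i n_i − 1))), where S_1 = (1/(∑ n_i − 1)) ∑_i ∑_j (X_{ij} − R̄^A)² and R̄^A = (∑_i ∑_j X_{ij})/(∑_i n_i). -/

import Mathlib

open MeasureTheory

/-- Theorem 1 (S1 part, exact form): E[S₁] = σ²(1 - ρ·∑nᵢ(nᵢ-1)/((∑nᵢ)(∑nᵢ-1))). -/
theorem expectation_S1 {Ω : Type*} [MeasurableSpace Ω] (P : Measure Ω)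
    [IsProbabilityMeasure P] (N : ℕ) (n : Fin N → ℕ) (hn : ∀ i, 1 ≤ n i)
    (htot : 2 ≤ ∑ i, n i)
    (X : (i : Fin N) → Fin (n i) → Ω → ℝ) (σ2 ρ : ℝ)
    (hint1 : ∀ i j, Integrable (X i j) P)
    (hint2 : ∀ i j i' j', Integrable (fun ω => X i j ω * X i' j' ω) P)
    (hmean : ∀ i j, ∫ ω, X i j ω ∂P = 0)
    (hvar : ∀ i j, ∫ ω, (X i j ω) ^ 2 ∂P = σ2)
    (hcov : ∀ i, ∀ j j' : Fin (n i), j ≠ j' → ∫ ω, X i j ω * X i j' ω ∂P = ρ * σ2)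
    (hcross : ∀ i i', i ≠ i' → ∀ (j : Fin (n i)) (j' : Fin (n i')),
      ∫ ω, X i j ω * X i' j' ω ∂P = 0) :
    ∫ ω, (1 / ((∑ i, (n i : ℝ)) - 1)) *
        ∑ i, ∑ j, (X i j ω - (∑ i', ∑ j', X i' j' ω) / ∑ i', (n i' : ℝ)) ^ 2 ∂P =
      σ2 * (1 - ρ * (∑ i, (n i : ℝ) * ((n i : ℝ) - 1)) /
        ((∑ i, (n i : ℝ)) * ((∑ i, (n i : ℝ)) - 1))) := by
  set M : ℝ := ∑ i, (n i : ℝ) with hMdef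
  have hMcast : M = ((∑ i, n i : ℕ) : ℝ) := by push_cast [hMdef]; ring
  have hM2 : (2:ℝ) ≤ M := by rw [hMcast]; exact_mod_cast htot
  have hM0 : M ≠ 0 := by linarith
  have hM1 : M - 1 ≠ 0 := by linarith
  set T : Ω → ℝ := fun ω => ∑ i, ∑ j, X i j ω with hTdef
  -- pointwise identity
  have key : ∀ ω, ∑ i, ∑ j, (X i j ω - T ω / M) ^ 2
      = (∑ i, ∑ j, (X i j ω) ^ 2) - (T ω) ^ 2 / M := by
    intro ω
    have expand : ∀ i : Fin N, ∑ j, (X i j ω - T ω / M) ^ 2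
        = (∑ j, (X i j ω) ^ 2) - 2 * (T ω / M) * (∑ j, X i j ω)
          + (n i : ℝ) * (T ω / M) ^ 2 := by
      intro i
      have hmid : ∑ j, 2 * X i j ω * (T ω / M) = 2 * (T ω / M) * ∑ j, X i j ω := by
        rw [Finset.mul_sum]; exact Finset.sum_congr rfl (fun j _ => by ring)
      rw [Finset.sum_congr rfl (fun j _ => sub_sq (X i j ω) (T ω / M))]
      rw [Finset.sum_add_distrib, Finset.sum_sub_distrib, Finset.sum_const,
        Finset.card_univ, Fintype.card_fin, nsmul_eq_mul, hmid]
    have hT : ∑ i, ∑ j, X i j ω = T ω := rfl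
    rw [Finset.sum_congr rfl (fun i _ => expand i)]
    rw [Finset.sum_add_distrib, Finset.sum_sub_distrib, ← Finset.sum_mul,
      ← Finset.mul_sum, hT, ← hMdef]
    field_simp
    ring
  -- integrability facts
  have hX2 : ∀ i j, Integrable (fun ω => (X i j ω)^2) P := by
    intro i j; simpa [pow_two] using hint2 i j i j
  have hSum2int : Integrable (fun ω => ∑ i, ∑ j, (X i j ω)^2) P :=
    integrable_finset_sum _ (fun i _ => integrable_finset_sum _ (fun j _ => hX2 i j))
  have hprodAA : ∀ i i', Integrable (fun ω => (∑ j, X i j ω) * (∑ j', X i' j' ω)) P := by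
    intro i i'
    have h : (fun ω => (∑ j, X i j ω) * (∑ j', X i' j' ω))
        = fun ω => ∑ j, ∑ j', X i j ω * X i' j' ω := by
      funext ω; rw [Finset.sum_mul_sum]
    rw [h]
    exact integrable_finset_sum _ fun j _ => integrable_finset_sum _ fun j' _ => hint2 i j i' j'
  have hT2eq : (fun ω => (T ω)^2)
      = fun ω => ∑ i, ∑ i', (∑ j, X i j ω) * (∑ j', X i' j' ω) := by
    funext ω
    rw [pow_two, hTdef]
    exact Finset.sum_mul_sum _ _ _ _
  have hT2int : Integrable (fun ω => (T ω)^2) P := by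
    rw [hT2eq]
    exact integrable_finset_sum _ fun i _ => integrable_finset_sum _ fun i' _ => hprodAA i i'
  -- expectation of the square sum
  have hS2 : ∫ ω, ∑ i, ∑ j, (X i j ω)^2 ∂P = M * σ2 := by
    rw [integral_finset_sum _ (fun i _ => integrable_finset_sum _ fun j _ => hX2 i j)]
    rw [Finset.sum_congr rfl (fun i _ => integral_finset_sum _ fun j _ => hX2 i j)]
    simp only [hvar, Finset.sum_const, Finset.card_univ, Fintype.card_fin, nsmul_eq_mul]
    rw [← Finset.sum_mul, ← hMdef]
  -- expectation of T^2
  have hAA : ∀ i i', ∫ ω, (∑ j, X i j ω) * (∑ j', X i' j' ω) ∂P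
      = ∑ j, ∑ j', ∫ ω, X i j ω * X i' j' ω ∂P := by
    intro i i'
    have h : (fun ω => (∑ j, X i j ω) * (∑ j', X i' j' ω))
        = fun ω => ∑ j, ∑ j', X i j ω * X i' j' ω := by
      funext ω; rw [Finset.sum_mul_sum]
    rw [h, integral_finset_sum _ (fun j _ => integrable_finset_sum _ fun j' _ => hint2 i j i' j')]
    exact Finset.sum_congr rfl fun j _ => integral_finset_sum _ fun j' _ => hint2 i j i' j'
  have hwithin : ∀ i, ∑ j, ∑ j' : Fin (n i), ∫ ω, X i j ω * X i j' ω ∂P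
      = (n i : ℝ) * σ2 + (n i : ℝ) * ((n i : ℝ) - 1) * (ρ * σ2) := by
    intro i
    have hrow : ∀ j : Fin (n i), ∑ j', ∫ ω, X i j ω * X i j' ω ∂P
        = σ2 + ((n i : ℝ) - 1) * (ρ * σ2) := by
      intro j
      rw [← Finset.add_sum_erase _ _ (Finset.mem_univ j)]
      congr 1
      · have h := hvar i j
        simp only [pow_two] at h
        exact h
      · rw [Finset.sum_congr rfl
          (fun j' hj' => hcov i j j' (Ne.symm (Finset.ne_of_mem_erase hj')))]
        rw [Finset.sum_const, Finset.card_erase_of_mem (Finset.mem_univ j),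
          Finset.card_univ, Fintype.card_fin, nsmul_eq_mul]
        have hc : ((n i - 1 : ℕ) : ℝ) = (n i : ℝ) - 1 := by
          have := hn i
          push_cast [Nat.cast_sub this]
          ring
        rw [hc]
    rw [Finset.sum_congr rfl (fun j _ => hrow j), Finset.sum_const, Finset.card_univ,
      Fintype.card_fin, nsmul_eq_mul]
    ring
  have hT2 : ∫ ω, (T ω)^2 ∂P
      = M * σ2 + ρ * σ2 * ∑ i, (n i : ℝ) * ((n i : ℝ) - 1) := by
    have h1 : ∫ ω, (T ω)^2 ∂P
        = ∑ i, ∑ i', ∫ ω, (∑ j, X i j ω) * (∑ j', X i' j' ω) ∂P := by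
      rw [show (∫ ω, (T ω)^2 ∂P)
          = ∫ ω, ∑ i, ∑ i', (∑ j, X i j ω) * (∑ j', X i' j' ω) ∂P by rw [← hT2eq]]
      rw [integral_finset_sum _ (fun i _ => integrable_finset_sum _ fun i' _ => hprodAA i i')]
      exact Finset.sum_congr rfl fun i _ => integral_finset_sum _ fun i' _ => hprodAA i i'
    rw [h1]
    have h2 : ∀ i : Fin N, ∑ i', ∫ ω, (∑ j, X i j ω) * (∑ j', X i' j' ω) ∂P
        = (n i : ℝ) * σ2 + (n i : ℝ) * ((n i : ℝ) - 1) * (ρ * σ2) := by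
      intro i
      rw [Finset.sum_eq_single_of_mem i (Finset.mem_univ i)
        (fun i' _ hi' => by rw [hAA]; simp [hcross i i' (Ne.symm hi')])]
      rw [hAA, hwithin]
    rw [Finset.sum_congr rfl (fun i _ => h2 i), Finset.sum_add_distrib,
      ← Finset.sum_mul, ← hMdef, ← Finset.sum_mul]
    ring
  -- put everything together
  simp only [show ∀ ω, ∑ i, ∑ j, (X i j ω - (∑ i', ∑ j', X i' j' ω) / M) ^ 2
      = (∑ i, ∑ j, (X i j ω) ^ 2) - (T ω) ^ 2 / M from key]
  rw [integral_const_mul, integral_sub hSum2int (hT2int.div_const M), integral_div,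
    hS2, hT2]
  field_simp
  ring
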